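/- Identifiability of non-parametric causal models from grouped single-node soft interventions (Theorem 7.1). Let G and Ĝ be DAGs on [d] and let τ : ℝ^d → ℝ^d be a C¹-diffeomorphism (τ = ĥ ∘ h^{−1} relating the latent variables of two candidate models, v = τ(z)). Let 𝔈 be a finite set of environments with a partition 𝔈 = ⋃_{i=1}^d 𝔈_i. For each E ∈ 𝔈, let p_E(z) = ∏_{i=1}^d p_i^E(z_i | z_{pa_G(i)}) and q_E(v) = ∏_{i=1}^d q_i^E(v_i | v_{pa_Ĝ(i)}) be probability densities on ℝ^d, continuously differentiable wherever positive, related by the change of variables p_E(z) = q_E(τ(z))·|det J_τ(z)| for all z (both models generate the same observation distribution in every environment). Assume: (i) all p_E (E ∈ 𝔈) have a common support O_z and all q_E a common support O_v; (ii) there exist permutations π and π′ of [d] such that for each i ∈ [d], any two distinct environments E₁, E₂ ∈ 𝔈_i satisfy p_j^{E₁} = p_j^{E₂} ⟺ j ≠ π(i) and q_j^{E₁} = q_j^{E₂} ⟺ j ≠ π′(i) (each group is a set of single-node soft interventions with unknown targets); (iii) there exist sets N_z ⊆ O_z and N_v ⊆ O_v with empty interior such that for every i ∈ [d], the family {p_{π(i)}^E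 : E ∈ 𝔈_i} is non-degenerate on node π(i) of G at every point of O_z ∖ N_z, and the family {q_{π′(i)}^E : E ∈ 𝔈_i} is non-degenerate on node π′(i) of Ĝ at every point of O_v ∖ N_v. Then there exists a permutation σ of [d] such that for all i, j ∈ [d], i ∈ pa_G(j) ⟺ σ(i) ∈ pa_Ĝ(σ(j)), and for every i ∈ [d], the component τ_{σ(i)} depends on O_z only on the coordinates z_j with j ∈ \bar{dom}_G(i) (i.e. ∂τ_{σ(i)}/∂z_j ≡ 0 on O_z for all j ∉ \bar{dom}_G(i)). -/

import Mathlib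

open Matrix MeasureTheory

/-- `E i j` means there is a directed edge `i → j`. A DAG has no directed cycles. -/
def IsDAG {d : ℕ} (E : Fin d → Fin d → Prop) : Prop :=
  ∀ i, ¬ Relation.TransGen E i i

/-- The set of parents of `i`. -/
def pa {d : ℕ} (E : Fin d → Fin d → Prop) (i : Fin d) : Set (Fin d) := {j | E j i}

/-- The set of children of `i`. -/
def ch {d : ℕ} (E : Fin d → Fin d → Prop) (i : Fin d) : Set (Fin d) := {j | E i j}

/-- `pa_G(i) ∪ {i}`. -/
def barPa {d : ℕ} (E : Fin d → Fin d → Prop) (i : Fin d) : Set (Fin d) := insert i (pa E i)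

/-- `ch_G(i) ∪ {i}`. -/
def barCh {d : ℕ} (E : Fin d → Fin d → Prop) (i : Fin d) : Set (Fin d) := insert i (ch E i)

/-- The effect-domination set `dom_G(i) = {j ∈ pa_G(i) : ch_G(i) ⊆ ch_G(j)}`. -/
def domSet {d : ℕ} (E : Fin d → Fin d → Prop) (i : Fin d) : Set (Fin d) :=
  {j | j ∈ pa E i ∧ ch E i ⊆ ch E j}

/-- `dom_G(i) ∪ {i}`. -/
def barDom {d : ℕ} (E : Fin d → Fin d → Prop) (i : Fin d) : Set (Fin d) :=
  insert i (domSet E i)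

/-- Ancestors of `i`: nodes with a directed path to `i`. -/
def ans {d : ℕ} (E : Fin d → Fin d → Prop) (i : Fin d) : Set (Fin d) :=
  {j | Relation.TransGen E j i}

/-- A set is ancestral if it is closed under taking ancestors. -/
def Ancestral {d : ℕ} (E : Fin d → Fin d → Prop) (S : Set (Fin d)) : Prop :=
  ∀ j ∈ S, ans E j ⊆ S

/-- The support of `B` matches the graph: `B i j ≠ 0 ↔ j ∈ \bar{pa}_G(i)`. -/
def SupportMatches {d : ℕ} (E : Fin d → Fin d → Prop) (B : Matrix (Fin d) (Fin d) ℝ) : Prop :=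
  ∀ i j, B i j ≠ 0 ↔ j ∈ barPa E i

/-- Node-level non-degeneracy: for every node `i`, the span of the `i`-th rows
`(B_k)_i` has dimension `|pa_G(i)| + 1`. -/
def NodeNonDegenerate {d K : ℕ} (E : Fin d → Fin d → Prop)
    (B : Fin K → Matrix (Fin d) (Fin d) ℝ) : Prop :=
  ∀ i, Module.finrank ℝ (Submodule.span ℝ (Set.range fun k => B k i)) = (pa E i).ncard + 1

/-- A function `f : ℝ^d → ℝ` depends only on the coordinates in `S`. -/
def DependsOnlyOn {d : ℕ} (S : Set (Fin d)) (f : (Fin d → ℝ) → ℝ) : Prop :=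
  ∀ z z' : Fin d → ℝ, (∀ j ∈ S, z j = z' j) → f z = f z'

/-- Non-degeneracy (Definition 7.1) of a family of conditional densities at node `i`
at the point `ẑ`, with distinguished base density `p e₀`: all densities are positive
at `ẑ`, and the matrix `[∂(p_{e₀}/p_e)/∂z_j]` (rows `e`, columns `j ∈ \bar{pa}_G(i)`)
has full column rank, i.e. its rows span all of `ℝ^{\bar{pa}_G(i)}`. -/
def NonDegenerateAt {d : ℕ} {ι : Type*} (E : Fin d → Fin d → Prop) (i : Fin d)
    (p : ι → (Fin d → ℝ) → ℝ) (e₀ : ι) (zhat : Fin d → ℝ) : Prop :=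
  (∀ e, 0 < p e zhat) ∧
  Submodule.span ℝ (Set.range fun e : ι =>
      fun j : barPa E i =>
        fderiv ℝ (fun z => p e₀ z / p e z) zhat (Pi.single (j : Fin d) 1)) = ⊤

section AuxiliaryLemmas

lemma fderiv_single_zero {d : ℕ} {S : Set (Fin d)} {f : (Fin d → ℝ) → ℝ}
    (hdep : DependsOnlyOn S f) {j : Fin d} (hj : j ∉ S) (z : Fin d → ℝ) :
    fderiv ℝ f z (Pi.single j 1) = 0 := by
  set w : Fin d → ℝ := Pi.single j 1 with hw
  by_cases hdiff : DifferentiableAt ℝ f z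
  · have hconst : ∀ t : ℝ, f (z + t • w) = f z := by
      intro t
      apply hdep
      intro s hs
      have hsj : s ≠ j := fun h => hj (h ▸ hs)
      simp [hw, Pi.single_eq_of_ne hsj]
    have hline : HasDerivAt (fun t : ℝ => z + t • w) w 0 := by
      simpa using ((hasDerivAt_id (0:ℝ)).smul_const w).const_add z
    have h2 : HasDerivAt (fun t : ℝ => f (z + t • w)) (fderiv ℝ f z w) 0 := by
      have hz : (z + (0:ℝ) • w) = z := by simp
      exact hdiff.hasFDerivAt.comp_hasDerivAt_of_eq (x := (0:ℝ)) hline hz.symm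
    have h3 : HasDerivAt (fun t : ℝ => f (z + t • w)) 0 0 := by
      have heq : (fun t : ℝ => f (z + t • w)) = fun _ => f z := funext hconst
      rw [heq]; exact hasDerivAt_const _ _
    exact h2.unique h3
  · rw [fderiv_zero_of_not_differentiableAt hdiff]
    rfl

lemma vanish_span {d : ℕ} {ι' : Type*} (Q : Set (Fin d)) [Fintype Q]
    (v : ι' → (Q → ℝ)) (hspan : Submodule.span ℝ (Set.range v) = ⊤)
    (w : Fin d → ℝ) (hw : ∀ e, ∑ k : Q, v e k * w k = 0) :
    ∀ k ∈ Q, w k = 0 := by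
  classical
  let φ : (Q → ℝ) →ₗ[ℝ] ℝ := ∑ k : Q, w k • LinearMap.proj k
  have hφapp : ∀ u : Q → ℝ, φ u = ∑ k : Q, u k * w k := by
    intro u
    simp [φ, LinearMap.sum_apply, mul_comm]
  have hker : ∀ u : Q → ℝ, φ u = 0 := by
    have hle : Submodule.span ℝ (Set.range v) ≤ LinearMap.ker φ := by
      rw [Submodule.span_le]
      rintro _ ⟨e, rfl⟩
      simp only [SetLike.mem_coe, LinearMap.mem_ker]
      rw [hφapp]; exact hw e
    rw [hspan] at hle
    intro u
    exact hle Submodule.mem_top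
  intro k hk
  have h := hker (Pi.single (⟨k, hk⟩ : Q) 1)
  rw [hφapp] at h
  simpa [Pi.single_apply] using h

lemma rows_diag {d : ℕ} (G : Fin d → Fin d → Prop) (hG : IsDAG G)
    (F N' : Matrix (Fin d) (Fin d) ℝ) (hFN : F * N' = 1) (β : Equiv.Perm (Fin d))
    (hsupp : ∀ s j, F (β s) j ≠ 0 → j ∈ barPa G s) : ∀ m, F (β m) m ≠ 0 := by
  classical
  intro m h0
  have hrow : ∀ c : Fin d → ℝ, c ᵥ* F = 0 → c = 0 := by
    intro c hc
    have : c ᵥ* F ᵥ* N' = c ᵥ* (F * N') := Matrix.vecMul_vecMul c F N'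
    rw [hc, hFN, Matrix.vecMul_one, Matrix.zero_vecMul] at this
    exact this.symm
  set S : Finset (Fin d) := (Set.toFinite (ans G m)).toFinset with hS
  have hmemS : ∀ x, x ∈ S ↔ Relation.TransGen G x m := by
    intro x; simp [hS, Set.Finite.mem_toFinset, ans]
  have hmS : m ∉ S := fun h => hG m ((hmemS m).1 h)
  set T : Finset (Fin d) := insert m S with hT
  have hsuppT : ∀ s ∈ T, ∀ j, F (β s) j ≠ 0 → j ∈ S := by
    intro s hs j hne
    have hj := hsupp s j hne
    rcases Finset.mem_insert.1 hs with rfl | hsS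
    · rcases Set.mem_insert_iff.1 hj with rfl | hjpa
      · exact (hne h0).elim
      · exact (hmemS j).2 (Relation.TransGen.single hjpa)
    · rcases Set.mem_insert_iff.1 hj with rfl | hjpa
      · exact hsS
      · exact (hmemS j).2
          (Relation.TransGen.trans (Relation.TransGen.single hjpa) ((hmemS s).1 hsS))
  have hli : LinearIndependent ℝ
      (fun s : (T : Finset (Fin d)) => fun k : (S : Finset (Fin d)) => F (β s.1) k.1) := by
    rw [Fintype.linearIndependent_iff]
    intro a ha
    have hak : ∀ k : (S : Finset (Fin d)), (∑ s : T, a s * F (β s.1) k.1) = 0 := by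
      intro k
      have := congrFun ha k
      simpa using this
    set c : Fin d → ℝ := fun x => ∑ s : T, a s * (if x = β s.1 then 1 else 0) with hc
    have hcrow : ∀ s : T, c (β s.1) = a s := by
      intro s
      rw [hc]
      simp only []
      rw [Finset.sum_eq_single s]
      · simp
      · intro s' _ hne
        have hne2 : β s.1 ≠ β s'.1 := fun h => hne (Subtype.ext (β.injective h.symm))
        simp [hne2]
      · intro h; exact (h (Finset.mem_univ s)).elim
    have hcvm : c ᵥ* F = 0 := by
      funext j
      have expand : (c ᵥ* F) j = ∑ x, c x * F x j := rfl
      rw [expand]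
      have swap : ∑ x, c x * F x j = ∑ s : T, a s * F (β s.1) j := by
        rw [hc]
        simp only [Finset.sum_mul]
        rw [Finset.sum_comm]
        congr 1
        funext s
        rw [Finset.sum_eq_single (β s.1)]
        · simp
        · intro x _ hne; simp [hne]  -- careful if direction
        · intro h; exact (h (Finset.mem_univ _)).elim
      rw [swap]
      by_cases hjS : j ∈ S
      · have := hak ⟨j, hjS⟩
        simpa using this
      · apply Finset.sum_eq_zero
        intro s _
        have : F (β s.1) j = 0 := by
          by_contra hne
          exact hjS (hsuppT s.1 s.2 j hne)
        rw [this, mul_zero]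
      
    have hc0 := hrow c hcvm
    intro s
    rw [← hcrow s, hc0]
    rfl
  have hcard := hli.fintype_card_le_finrank
  rw [Module.finrank_pi] at hcard
  simp only [Fintype.card_coe] at hcard
  rw [hT, Finset.card_insert_of_notMem hmS] at hcard
  omega

lemma comb {d : ℕ} (E Ehat : Fin d → Fin d → Prop) (hG : IsDAG E) (hGhat : IsDAG Ehat)
    (ρ : Equiv.Perm (Fin d)) (M N : Matrix (Fin d) (Fin d) ℝ)
    (hMN : M * N = 1) (hNM : N * M = 1)
    (hA : ∀ m k j, k ∈ barPa Ehat (ρ m) → j ∉ barPa E m → M k j = 0)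
    (hB : ∀ m k j, k ∈ barPa E m → j ∉ barPa Ehat (ρ m) → N k j = 0) :
    ∀ m c, E m c ↔ Ehat (ρ m) (ρ c) := by
  have hMsupp : ∀ s j, M (ρ s) j ≠ 0 → j ∈ barPa E s := by
    intro s j hne
    by_contra hj
    exact hne (hA s (ρ s) j (Set.mem_insert _ _) hj)
  have hMdiag : ∀ m, M (ρ m) m ≠ 0 := rows_diag E hG M N hMN ρ hMsupp
  have hNsupp : ∀ s j, N (ρ.symm s) j ≠ 0 → j ∈ barPa Ehat s := by
    intro s j hne
    by_contra hj
    refine hne (hB (ρ.symm s) (ρ.symm s) j (Set.mem_insert _ _) ?_)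
    rwa [Equiv.apply_symm_apply]
  have hNdiag' : ∀ m, N (ρ.symm m) m ≠ 0 := rows_diag Ehat hGhat N M hNM ρ.symm hNsupp
  have hNdiag : ∀ m, N m (ρ m) ≠ 0 := by
    intro m
    have := hNdiag' (ρ m)
    rwa [Equiv.symm_apply_apply] at this
  intro m c
  constructor
  · intro hEmc
    have hmem : m ∈ barPa E c := Set.mem_insert_of_mem _ hEmc
    have : ρ m ∈ barPa Ehat (ρ c) := by
      by_contra hnot
      exact hNdiag m (hB c m (ρ m) hmem hnot)
    rcases Set.mem_insert_iff.1 this with heq | hpa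
    · exfalso
      have : m = c := ρ.injective heq
      subst this
      exact hG m (Relation.TransGen.single hEmc)
    · exact hpa
  · intro hEhat
    have hmem : ρ m ∈ barPa Ehat (ρ c) := Set.mem_insert_of_mem _ hEhat
    have : m ∈ barPa E c := by
      by_contra hnot
      exact hMdiag m (hA c (ρ m) m hmem hnot)
    rcases Set.mem_insert_iff.1 this with heq | hpa
    · exfalso
      subst heq
      exact hGhat (ρ m) (Relation.TransGen.single hEhat)
    · exact hpa

lemma keyGlobal {d : ℕ} {ι' : Type*} [Fintype ι']
    (τ τv : (Fin d → ℝ) → (Fin d → ℝ))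
    (hτ : ContDiff ℝ 1 τ) (hτv : Continuous τv)
    (hl : Function.LeftInverse τv τ) (hr : Function.RightInverse τv τ)
    (Oz Ov : Set (Fin d → ℝ)) (hOzo : IsOpen Oz)
    (hmap : ∀ z ∈ Oz, τ z ∈ Ov)
    (Nv : Set (Fin d → ℝ)) (hNvi : interior Nv = ∅)
    (P Q : Set (Fin d))
    (f g : ι' → (Fin d → ℝ) → ℝ)
    (hfg : ∀ e, ∀ z ∈ Oz, f e =ᶠ[nhds z] (g e) ∘ τ)
    (hfdep : ∀ e, DependsOnlyOn P (f e))
    (hgdep : ∀ e, DependsOnlyOn Q (g e))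
    (hgdiff : ∀ e, ∀ v ∈ Ov, DifferentiableAt ℝ (g e) v)
    (hspan : ∀ v ∈ Ov, v ∉ Nv → Submodule.span ℝ (Set.range fun e : ι' =>
        fun k : Q => fderiv ℝ (g e) v (Pi.single (k : Fin d) 1)) = ⊤) :
    ∀ z ∈ Oz, ∀ k ∈ Q, ∀ j ∉ P, fderiv ℝ τ z (Pi.single j 1) k = 0 := by
  classical
  haveI : Fintype Q := (Set.toFinite Q).fintype
  have hτdiff : Differentiable ℝ τ := hτ.differentiable one_ne_zero
  -- Step 1: pointwise on the good dense set
  have step1 : ∀ z ∈ Oz, τ z ∉ Nv → ∀ j ∉ P, ∀ k ∈ Q,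
      fderiv ℝ τ z (Pi.single j 1) k = 0 := by
    intro z hz hzn j hj
    set w : Fin d → ℝ := fderiv ℝ τ z (Pi.single j 1) with hwdef
    have hvOv : τ z ∈ Ov := hmap z hz
    have key : ∀ e, ∑ k : Q, (fderiv ℝ (g e) (τ z) (Pi.single (k : Fin d) 1)) * w k = 0 := by
      intro e
      have hgd : DifferentiableAt ℝ (g e) (τ z) := hgdiff e _ hvOv
      have hfderiv : fderiv ℝ (f e) z = (fderiv ℝ (g e) (τ z)).comp (fderiv ℝ τ z) := by
        rw [(hfg e z hz).fderiv_eq]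
        exact fderiv_comp z hgd (hτdiff z)
      have hzero : fderiv ℝ (f e) z (Pi.single j 1) = 0 :=
        fderiv_single_zero (hfdep e) hj z
      rw [hfderiv] at hzero
      have hzero2 : fderiv ℝ (g e) (τ z) w = 0 := hzero
      have hwsum : (∑ k : Fin d, w k • (Pi.single k 1 : Fin d → ℝ)) = w := by
        have h1 : ∀ k, w k • (Pi.single k 1 : Fin d → ℝ) = Pi.single k (w k) := by
          intro k; rw [← Pi.single_smul, smul_eq_mul, mul_one]
        simp_rw [h1]
        exact Finset.univ_sum_single w
      have hzero3 : ∑ k : Fin d, w k * fderiv ℝ (g e) (τ z) (Pi.single k 1) = 0 := by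
        have : fderiv ℝ (g e) (τ z) (∑ k : Fin d, w k • (Pi.single k 1 : Fin d → ℝ))
            = ∑ k : Fin d, w k * fderiv ℝ (g e) (τ z) (Pi.single k 1) := by
          rw [map_sum]
          congr 1
          funext k
          rw [ContinuousLinearMap.map_smul]
          rfl
        rw [hwsum] at this
        rw [← this]; exact hzero2
      have hrestrict : ∑ k ∈ Q.toFinset, w k * fderiv ℝ (g e) (τ z) (Pi.single k 1)
          = ∑ k : Fin d, w k * fderiv ℝ (g e) (τ z) (Pi.single k 1) := by
        apply Finset.sum_subset (Finset.subset_univ _)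
        intro k _ hk
        have hkQ : k ∉ Q := by simpa using hk
        rw [fderiv_single_zero (hgdep e) hkQ, mul_zero]
      have hsub : ∑ k : Q, w (k : Fin d) * fderiv ℝ (g e) (τ z) (Pi.single (k : Fin d) 1)
          = ∑ k ∈ Q.toFinset, w k * fderiv ℝ (g e) (τ z) (Pi.single k 1) :=
        Finset.sum_set_coe (s := Q) (f := fun k => w k * fderiv ℝ (g e) (τ z) (Pi.single k 1))
      calc ∑ k : Q, (fderiv ℝ (g e) (τ z) (Pi.single (k : Fin d) 1)) * w k
          = ∑ k : Q, w (k : Fin d) * fderiv ℝ (g e) (τ z) (Pi.single (k : Fin d) 1) := by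
            simp_rw [mul_comm]
        _ = ∑ k : Fin d, w k * fderiv ℝ (g e) (τ z) (Pi.single k 1) := by
            rw [hsub, hrestrict]
        _ = 0 := hzero3
    exact fun k hk => vanish_span Q _ (hspan (τ z) hvOv hzn) w key k hk
  -- Step 2: extension by continuity
  intro z hz k hk j hj
  set h : (Fin d → ℝ) → ℝ := fun z' => fderiv ℝ τ z' (Pi.single j 1) k with hh
  have hcont : Continuous h := by
    have h1 : Continuous fun z' => fderiv ℝ τ z' := hτ.continuous_fderiv one_ne_zero
    have h2 : Continuous fun z' => fderiv ℝ τ z' (Pi.single j 1) := by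
      exact (ContinuousLinearMap.apply ℝ (Fin d → ℝ) (Pi.single j 1)).continuous.comp h1
    exact (continuous_apply k).comp h2
  set D : Set (Fin d → ℝ) := {z' | z' ∈ Oz ∧ τ z' ∉ Nv} with hD
  have hD0 : ∀ z' ∈ D, h z' = 0 := fun z' hz' => step1 z' hz'.1 hz'.2 j hj k hk
  have hclos : z ∈ closure D := by
    rw [mem_closure_iff]
    intro U hU hzU
    set W : Set (Fin d → ℝ) := U ∩ Oz with hW
    have hWo : IsOpen W := hU.inter hOzo
    have hWz : z ∈ W := ⟨hzU, hz⟩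
    have himg : τ '' W = τv ⁻¹' W := by
      ext v
      constructor
      · rintro ⟨w', hw', rfl⟩
        simpa [hl w'] using hw'
      · intro hv
        exact ⟨τv v, hv, hr v⟩
    have hVo : IsOpen (τ '' W) := by rw [himg]; exact hτv.isOpen_preimage W hWo
    have hVne : (τ '' W).Nonempty := ⟨τ z, z, hWz, rfl⟩
    have : ¬ (τ '' W ⊆ Nv) := by
      intro hsub
      have : τ '' W ⊆ interior Nv := interior_maximal hsub hVo
      rw [hNvi] at this
      exact hVne.ne_empty (Set.subset_empty_iff.1 this)
    rcases Set.not_subset.1 this with ⟨v, hvV, hvN⟩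
    rcases hvV with ⟨z', hz'W, rfl⟩
    exact ⟨z', hz'W.1, hz'W.2, hvN⟩
  have hDsub : D ⊆ h ⁻¹' {0} := fun z' hz' => hD0 z' hz'
  have : closure D ⊆ h ⁻¹' {0} :=
    (IsClosed.preimage hcont isClosed_singleton).closure_subset_iff.2 hDsub
  exact this hclos

lemma fac_pos {d : ℕ} {ι : Type*} [Fintype ι]
    (fac : ι → Fin d → (Fin d → ℝ) → ℝ) (J : ι → (Fin d → ℝ) → ℝ)
    (hJ : ∀ e z, J e z = ∏ n, fac e n z) (hnn : ∀ e n z, 0 ≤ fac e n z)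
    {e : ι} {z : Fin d → ℝ} (h : 0 < J e z) : ∀ n, 0 < fac e n z := by
  intro n
  rcases lt_or_eq_of_le (hnn e n z) with hlt | heq
  · exact hlt
  · exfalso
    have : J e z = 0 := by
      rw [hJ]
      exact Finset.prod_eq_zero (Finset.mem_univ n) heq.symm
    rw [this] at h
    exact lt_irrefl _ h

lemma ratio_ev {d : ℕ} {ι : Type*} [Fintype ι]
    (fac : ι → Fin d → (Fin d → ℝ) → ℝ) (J : ι → (Fin d → ℝ) → ℝ)
    (hJ : ∀ e z, J e z = ∏ n, fac e n z) (hnn : ∀ e n z, 0 ≤ fac e n z)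
    (m : Fin d) (e₀ e : ι) (heq : ∀ n, n ≠ m → fac e₀ n = fac e n)
    (z : Fin d → ℝ)
    (hc₀ : ContinuousAt (J e₀) z) (hc : ContinuousAt (J e) z)
    (h₀ : 0 < J e₀ z) (h1 : 0 < J e z) :
    (fun z' => fac e₀ m z' / fac e m z') =ᶠ[nhds z] fun z' => J e₀ z' / J e z' := by
  have hev₀ : ∀ᶠ z' in nhds z, 0 < J e₀ z' :=
    hc₀.eventually_mem (isOpen_Ioi.mem_nhds h₀)
  have hev1 : ∀ᶠ z' in nhds z, 0 < J e z' :=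
    hc.eventually_mem (isOpen_Ioi.mem_nhds h1)
  filter_upwards [hev₀, hev1] with z' hp₀ hp1
  have hpos₀ : ∀ n, 0 < fac e₀ n z' := fac_pos fac J hJ hnn hp₀
  have hpos1 : ∀ n, 0 < fac e n z' := fac_pos fac J hJ hnn hp1
  have hsplit₀ : J e₀ z' = fac e₀ m z' * ∏ n ∈ Finset.univ.erase m, fac e₀ n z' := by
    rw [hJ]
    exact (Finset.mul_prod_erase Finset.univ _ (Finset.mem_univ m)).symm
  have hsplit1 : J e z' = fac e m z' * ∏ n ∈ Finset.univ.erase m, fac e n z' := by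
    rw [hJ]
    exact (Finset.mul_prod_erase Finset.univ _ (Finset.mem_univ m)).symm
  have hprodeq : ∏ n ∈ Finset.univ.erase m, fac e₀ n z' = ∏ n ∈ Finset.univ.erase m, fac e n z' := by
    apply Finset.prod_congr rfl
    intro n hn
    rw [heq n (Finset.ne_of_mem_erase hn)]
  have hprodne : (∏ n ∈ Finset.univ.erase m, fac e n z') ≠ 0 :=
    ne_of_gt (Finset.prod_pos fun n _ => hpos1 n)
  rw [hsplit₀, hsplit1, hprodeq, mul_div_mul_right _ _ hprodne]

-- matrix of a CLM helper
lemma clm_matrix_mul {d : ℕ} (A B : (Fin d → ℝ) →L[ℝ] (Fin d → ℝ))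
    (hBA : B.comp A = ContinuousLinearMap.id ℝ (Fin d → ℝ)) :
    (Matrix.of fun a x => B (Pi.single x 1) a) * (Matrix.of fun x b => A (Pi.single b 1) x) = 1 := by
  classical
  ext a b
  rw [Matrix.mul_apply, Matrix.one_apply]
  have hsum : ∀ u : Fin d → ℝ, (∑ x : Fin d, u x • (Pi.single x 1 : Fin d → ℝ)) = u := by
    intro u
    have h1 : ∀ x, u x • (Pi.single x 1 : Fin d → ℝ) = Pi.single x (u x) := by
      intro x; rw [← Pi.single_smul, smul_eq_mul, mul_one]
    simp_rw [h1]
    exact Finset.univ_sum_single u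
  have key : B (A (Pi.single b 1)) = ∑ x : Fin d, (A (Pi.single b 1) x) • B (Pi.single x 1) := by
    conv_lhs => rw [← hsum (A (Pi.single b 1))]
    rw [map_sum]
    congr 1
    funext x
    rw [ContinuousLinearMap.map_smul]
  have key2 : B (A (Pi.single b 1)) a
      = ∑ x : Fin d, (A (Pi.single b 1) x) * B (Pi.single x 1) a := by
    rw [key]
    rw [Finset.sum_apply]
    congr 1
  have hid : B (A (Pi.single b 1)) = Pi.single b 1 := by
    have := congrFun (congrArg (fun (L : (Fin d → ℝ) →L[ℝ] (Fin d → ℝ)) => (L : (Fin d → ℝ) → (Fin d → ℝ))) hBA) (Pi.single b 1)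
    simpa using this
  calc ∑ x : Fin d, Matrix.of (fun a x => B (Pi.single x 1) a) a x * Matrix.of (fun x b => A (Pi.single b 1) x) x b
      = ∑ x : Fin d, (A (Pi.single b 1) x) * B (Pi.single x 1) a := by
        apply Finset.sum_congr rfl
        intro x _
        simp [Matrix.of_apply, mul_comm]
    _ = B (A (Pi.single b 1)) a := key2.symm
    _ = if a = b then 1 else 0 := by rw [hid, Pi.single_apply]

end AuxiliaryLemmas

/-- Identifiability of non-parametric causal models from grouped single-node soft
interventions (Theorem 7.1). -/
theorem nonparametric_identifiability
    {d : ℕ} {ι : Type*} [Fintype ι]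
    (E Ehat : Fin d → Fin d → Prop) (hG : IsDAG E) (hGhat : IsDAG Ehat)
    -- the C¹-diffeomorphism `τ = ĥ ∘ h⁻¹` relating the two latent representations
    (τ τinv : (Fin d → ℝ) → (Fin d → ℝ))
    (hτ : ContDiff ℝ 1 τ) (hτinv : ContDiff ℝ 1 τinv)
    (hleft : Function.LeftInverse τinv τ) (hright : Function.RightInverse τinv τ)
    -- environments and the partition `𝔈 = ⋃ᵢ 𝔈ᵢ`, encoded by `part`
    (part : ι → Fin d)
    -- conditional factors and joint densities of the two models
    (pfac qfac : ι → Fin d → (Fin d → ℝ) → ℝ)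
    (hpdep : ∀ e i, DependsOnlyOn (barPa E i) (pfac e i))
    (hqdep : ∀ e i, DependsOnlyOn (barPa Ehat i) (qfac e i))
    (pJ qJ : ι → (Fin d → ℝ) → ℝ)
    (hpJ : ∀ e z, pJ e z = ∏ i, pfac e i z)
    (hqJ : ∀ e v, qJ e v = ∏ i, qfac e i v)
    (hpnonneg : ∀ e i z, 0 ≤ pfac e i z)
    (hqnonneg : ∀ e i v, 0 ≤ qfac e i v)
    (hpprob : ∀ e, ∫ z : Fin d → ℝ, pJ e z = 1)
    (hqprob : ∀ e, ∫ v : Fin d → ℝ, qJ e v = 1)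
    (hpC1 : ∀ e z, 0 < pJ e z → ContDiffAt ℝ 1 (pJ e) z)
    (hqC1 : ∀ e v, 0 < qJ e v → ContDiffAt ℝ 1 (qJ e) v)
    -- both models generate the same observation distribution: change of variables
    (hchange : ∀ e z, pJ e z = qJ e (τ z) * |((fderiv ℝ τ z).toLinearMap).det|)
    -- (i) common supports
    (Oz Ov : Set (Fin d → ℝ))
    (hOz : ∀ e, {z | 0 < pJ e z} = Oz)
    (hOv : ∀ e, {v | 0 < qJ e v} = Ov)
    -- (ii) each group is a set of single-node soft interventions with unknown targets
    (π π' : Equiv.Perm (Fin d))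
    (hint_p : ∀ i : Fin d, ∀ e₁ e₂ : ι, part e₁ = i → part e₂ = i → e₁ ≠ e₂ →
        ∀ j, (pfac e₁ j = pfac e₂ j ↔ j ≠ π i))
    (hint_q : ∀ i : Fin d, ∀ e₁ e₂ : ι, part e₁ = i → part e₂ = i → e₁ ≠ e₂ →
        ∀ j, (qfac e₁ j = qfac e₂ j ↔ j ≠ π' i))
    -- (iii) non-degeneracy outside exceptional sets with empty interior
    (Nz Nv : Set (Fin d → ℝ))
    (hNz : Nz ⊆ Oz) (hNv : Nv ⊆ Ov)
    (hNzint : interior Nz = ∅) (hNvint : interior Nv = ∅)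
    (hndp : ∀ i : Fin d, ∃ e₀ : {e : ι // part e = i}, ∀ z ∈ Oz \ Nz,
        NonDegenerateAt E (π i) (fun e : {e : ι // part e = i} => pfac e.1 (π i)) e₀ z)
    (hndq : ∀ i : Fin d, ∃ e₀ : {e : ι // part e = i}, ∀ v ∈ Ov \ Nv,
        NonDegenerateAt Ehat (π' i) (fun e : {e : ι // part e = i} => qfac e.1 (π' i)) e₀ v) :
    ∃ σ : Equiv.Perm (Fin d),
      (∀ i j, i ∈ pa E j ↔ σ i ∈ pa Ehat (σ j)) ∧
      ∀ i j, j ∉ barDom E i → ∀ z ∈ Oz,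
        fderiv ℝ (fun w => τ w (σ i)) z (Pi.single j 1) = 0 := by
  classical
  rcases Nat.eq_zero_or_pos d with hd0 | hdpos
  · subst hd0
    exact ⟨Equiv.refl _, fun i => i.elim0, fun i => i.elim0⟩
  -- some environment
  set i₀ : Fin d := ⟨0, hdpos⟩ with hi₀
  obtain ⟨ew₀, -⟩ := hndp i₀
  set eW : ι := ew₀.1 with heW
  -- differentiability of τ, τinv
  have hτd : Differentiable ℝ τ := hτ.differentiable one_ne_zero
  have hτinvd : Differentiable ℝ τinv := hτinv.differentiable one_ne_zero
  -- chain rule identities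
  have hcomp1 : ∀ z, (fderiv ℝ τinv (τ z)).comp (fderiv ℝ τ z)
      = ContinuousLinearMap.id ℝ (Fin d → ℝ) := by
    intro z
    have h1 : HasFDerivAt (τinv ∘ τ) ((fderiv ℝ τinv (τ z)).comp (fderiv ℝ τ z)) z :=
      ((hτinvd (τ z)).hasFDerivAt).comp z ((hτd z).hasFDerivAt)
    have heq : τinv ∘ τ = id := funext hleft
    rw [heq] at h1
    exact h1.unique (hasFDerivAt_id z)
  have hcomp2 : ∀ z, (fderiv ℝ τ z).comp (fderiv ℝ τinv (τ z))
      = ContinuousLinearMap.id ℝ (Fin d → ℝ) := by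
    intro z
    have h1 : HasFDerivAt (τ ∘ τinv) ((fderiv ℝ τ (τinv (τ z))).comp (fderiv ℝ τinv (τ z))) (τ z) :=
      ((hτd (τinv (τ z))).hasFDerivAt).comp (τ z) ((hτinvd (τ z)).hasFDerivAt)
    have heq : τ ∘ τinv = id := funext hright
    rw [heq] at h1
    have h2 := h1.unique (hasFDerivAt_id (τ z))
    rwa [hleft z] at h2
  -- determinant nonzero
  have hdet : ∀ z, ((fderiv ℝ τ z).toLinearMap).det ≠ 0 := by
    intro z
    have h := congrArg (fun (L : (Fin d → ℝ) →L[ℝ] (Fin d → ℝ)) =>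
      LinearMap.det (L : (Fin d → ℝ) →ₗ[ℝ] (Fin d → ℝ))) (hcomp1 z)
    simp only [ContinuousLinearMap.coe_comp, LinearMap.det_comp,
      ContinuousLinearMap.coe_id, LinearMap.det_id] at h
    exact right_ne_zero_of_mul_eq_one (a := LinearMap.det (fderiv ℝ τinv (τ z) : (Fin d → ℝ) →ₗ[ℝ] (Fin d → ℝ)))
      (by rw [← LinearMap.det_comp]; exact h)
  -- ratio identity
  have hratio : ∀ e e' z, pJ e z / pJ e' z = qJ e (τ z) / qJ e' (τ z) := by
    intro e e' z
    rw [hchange e z, hchange e' z]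
    exact mul_div_mul_right _ _ (abs_ne_zero.2 (hdet z))
  -- nonnegativity of joints
  have hpJnn : ∀ e z, 0 ≤ pJ e z := by
    intro e z; rw [hpJ]; exact Finset.prod_nonneg fun n _ => hpnonneg e n z
  have hqJnn : ∀ e v, 0 ≤ qJ e v := by
    intro e v; rw [hqJ]; exact Finset.prod_nonneg fun n _ => hqnonneg e n v
  -- membership characterizations
  have hOzmem : ∀ e z, z ∈ Oz ↔ 0 < pJ e z := by
    intro e z; rw [← hOz e]; rfl
  have hOvmem : ∀ e v, v ∈ Ov ↔ 0 < qJ e v := by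
    intro e v; rw [← hOv e]; rfl
  -- mapping properties
  have hmapzv : ∀ z ∈ Oz, τ z ∈ Ov := by
    intro z hz
    have hppos := (hOzmem eW z).1 hz
    rw [hOvmem eW]
    rcases lt_or_eq_of_le (hqJnn eW (τ z)) with hlt | heq0
    · exact hlt
    · exfalso
      rw [hchange eW z, ← heq0, zero_mul] at hppos
      exact lt_irrefl _ hppos
  have hmapvz : ∀ v ∈ Ov, τinv v ∈ Oz := by
    intro v hv
    have hqpos := (hOvmem eW v).1 hv
    rw [hOzmem eW]
    rw [hchange eW (τinv v), hright v]
    exact mul_pos hqpos (abs_pos.2 (hdet (τinv v)))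
  -- openness
  have hOzo : IsOpen Oz := by
    rw [isOpen_iff_mem_nhds]
    intro z hz
    have hpos := (hOzmem eW z).1 hz
    have hev := ((hpC1 eW z hpos).continuousAt).eventually_mem (isOpen_Ioi.mem_nhds hpos)
    refine Filter.mem_of_superset hev ?_
    intro z' h'
    exact (hOzmem eW z').2 h'
  have hOvo : IsOpen Ov := by
    rw [isOpen_iff_mem_nhds]
    intro v hv
    have hpos := (hOvmem eW v).1 hv
    have hev := ((hqC1 eW v hpos).continuousAt).eventually_mem (isOpen_Ioi.mem_nhds hpos)
    refine Filter.mem_of_superset hev ?_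
    intro v' h'
    exact (hOvmem eW v').2 h'
  -- extended sparsity for τ
  have hAi : ∀ i : Fin d, ∀ z ∈ Oz, ∀ k ∈ barPa Ehat (π' i), ∀ j ∉ barPa E (π i),
      fderiv ℝ τ z (Pi.single j 1) k = 0 := by
    intro i
    obtain ⟨e₀, hnd⟩ := hndq i
    set f : {e : ι // part e = i} → (Fin d → ℝ) → ℝ :=
      fun e z => pfac e₀.1 (π i) z / pfac e.1 (π i) z with hf
    set g : {e : ι // part e = i} → (Fin d → ℝ) → ℝ :=
      fun e v => qfac e₀.1 (π' i) v / qfac e.1 (π' i) v with hg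
    have hpeq : ∀ e : {e : ι // part e = i}, ∀ n, n ≠ π i → pfac e₀.1 n = pfac e.1 n := by
      intro e n hn
      by_cases hee : e₀ = e
      · rw [hee]
      · exact (hint_p i e₀.1 e.1 e₀.2 e.2 (fun h => hee (Subtype.ext h)) n).2 hn
    have hqeq : ∀ e : {e : ι // part e = i}, ∀ n, n ≠ π' i → qfac e₀.1 n = qfac e.1 n := by
      intro e n hn
      by_cases hee : e₀ = e
      · rw [hee]
      · exact (hint_q i e₀.1 e.1 e₀.2 e.2 (fun h => hee (Subtype.ext h)) n).2 hn
    have hgev : ∀ e : {e : ι // part e = i}, ∀ v ∈ Ov,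
        g e =ᶠ[nhds v] fun v' => qJ e₀.1 v' / qJ e.1 v' := by
      intro e v hv
      exact ratio_ev qfac qJ hqJ hqnonneg (π' i) e₀.1 e.1 (hqeq e) v
        ((hqC1 e₀.1 v ((hOvmem e₀.1 v).1 hv)).continuousAt)
        ((hqC1 e.1 v ((hOvmem e.1 v).1 hv)).continuousAt)
        ((hOvmem e₀.1 v).1 hv) ((hOvmem e.1 v).1 hv)
    have hfev : ∀ e : {e : ι // part e = i}, ∀ z ∈ Oz,
        f e =ᶠ[nhds z] fun z' => pJ e₀.1 z' / pJ e.1 z' := by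
      intro e z hz
      exact ratio_ev pfac pJ hpJ hpnonneg (π i) e₀.1 e.1 (hpeq e) z
        ((hpC1 e₀.1 z ((hOzmem e₀.1 z).1 hz)).continuousAt)
        ((hpC1 e.1 z ((hOzmem e.1 z).1 hz)).continuousAt)
        ((hOzmem e₀.1 z).1 hz) ((hOzmem e.1 z).1 hz)
    refine keyGlobal τ τinv hτ hτinv.continuous hleft hright Oz Ov hOzo hmapzv Nv hNvint
      (barPa E (π i)) (barPa Ehat (π' i)) f g ?_ ?_ ?_ ?_ ?_
    · -- hfg
      intro e z hz
      have t1 := hfev e z hz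
      have t2 : (fun z' => pJ e₀.1 z' / pJ e.1 z')
          = fun z' => qJ e₀.1 (τ z') / qJ e.1 (τ z') :=
        funext fun z' => hratio e₀.1 e.1 z'
      have t4 := hgev e (τ z) (hmapzv z hz)
      have t5 : g e ∘ τ =ᶠ[nhds z] (fun v => qJ e₀.1 v / qJ e.1 v) ∘ τ :=
        t4.comp_tendsto (hτ.continuous.tendsto z)
      rw [t2] at t1
      exact t1.trans t5.symm
    · -- hfdep
      intro e z z' hzz
      simp only [hf]
      rw [hpdep e₀.1 (π i) z z' hzz, hpdep e.1 (π i) z z' hzz]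
    · -- hgdep
      intro e v v' hvv
      simp only [hg]
      rw [hqdep e₀.1 (π' i) v v' hvv, hqdep e.1 (π' i) v v' hvv]
    · -- hgdiff
      intro e v hv
      have hq₀ := (hOvmem e₀.1 v).1 hv
      have hq1 := (hOvmem e.1 v).1 hv
      have hdiff : DifferentiableAt ℝ (fun v' => qJ e₀.1 v' / qJ e.1 v') v :=
        ((hqC1 e₀.1 v hq₀).div (hqC1 e.1 v hq1) (ne_of_gt hq1)).differentiableAt one_ne_zero
      exact hdiff.congr_of_eventuallyEq (hgev e v hv)
    · -- hspan
      intro v hv hvn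
      exact (hnd v ⟨hv, hvn⟩).2
  -- extended sparsity for τinv
  have hBi : ∀ i : Fin d, ∀ v ∈ Ov, ∀ k ∈ barPa E (π i), ∀ j ∉ barPa Ehat (π' i),
      fderiv ℝ τinv v (Pi.single j 1) k = 0 := by
    intro i
    obtain ⟨e₀, hnd⟩ := hndp i
    set f : {e : ι // part e = i} → (Fin d → ℝ) → ℝ :=
      fun e v => qfac e₀.1 (π' i) v / qfac e.1 (π' i) v with hf
    set g : {e : ι // part e = i} → (Fin d → ℝ) → ℝ :=
      fun e z => pfac e₀.1 (π i) z / pfac e.1 (π i) z with hg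
    have hpeq : ∀ e : {e : ι // part e = i}, ∀ n, n ≠ π i → pfac e₀.1 n = pfac e.1 n := by
      intro e n hn
      by_cases hee : e₀ = e
      · rw [hee]
      · exact (hint_p i e₀.1 e.1 e₀.2 e.2 (fun h => hee (Subtype.ext h)) n).2 hn
    have hqeq : ∀ e : {e : ι // part e = i}, ∀ n, n ≠ π' i → qfac e₀.1 n = qfac e.1 n := by
      intro e n hn
      by_cases hee : e₀ = e
      · rw [hee]
      · exact (hint_q i e₀.1 e.1 e₀.2 e.2 (fun h => hee (Subtype.ext h)) n).2 hn
    have hgev : ∀ e : {e : ι // part e = i}, ∀ z ∈ Oz,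
        g e =ᶠ[nhds z] fun z' => pJ e₀.1 z' / pJ e.1 z' := by
      intro e z hz
      exact ratio_ev pfac pJ hpJ hpnonneg (π i) e₀.1 e.1 (hpeq e) z
        ((hpC1 e₀.1 z ((hOzmem e₀.1 z).1 hz)).continuousAt)
        ((hpC1 e.1 z ((hOzmem e.1 z).1 hz)).continuousAt)
        ((hOzmem e₀.1 z).1 hz) ((hOzmem e.1 z).1 hz)
    have hfev : ∀ e : {e : ι // part e = i}, ∀ v ∈ Ov,
        f e =ᶠ[nhds v] fun v' => qJ e₀.1 v' / qJ e.1 v' := by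
      intro e v hv
      exact ratio_ev qfac qJ hqJ hqnonneg (π' i) e₀.1 e.1 (hqeq e) v
        ((hqC1 e₀.1 v ((hOvmem e₀.1 v).1 hv)).continuousAt)
        ((hqC1 e.1 v ((hOvmem e.1 v).1 hv)).continuousAt)
        ((hOvmem e₀.1 v).1 hv) ((hOvmem e.1 v).1 hv)
    refine keyGlobal τinv τ hτinv hτ.continuous hright hleft Ov Oz hOvo hmapvz Nz hNzint
      (barPa Ehat (π' i)) (barPa E (π i)) f g ?_ ?_ ?_ ?_ ?_
    · intro e v hv
      have t1 := hfev e v hv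
      have t2 : (fun v' => qJ e₀.1 v' / qJ e.1 v')
          = fun v' => pJ e₀.1 (τinv v') / pJ e.1 (τinv v') := by
        funext v'
        rw [hratio e₀.1 e.1 (τinv v'), hright v']
      have t4 := hgev e (τinv v) (hmapvz v hv)
      have t5 : g e ∘ τinv =ᶠ[nhds v] (fun z => pJ e₀.1 z / pJ e.1 z) ∘ τinv :=
        t4.comp_tendsto (hτinv.continuous.tendsto v)
      rw [t2] at t1
      exact t1.trans t5.symm
    · intro e v v' hvv
      simp only [hf]
      rw [hqdep e₀.1 (π' i) v v' hvv, hqdep e.1 (π' i) v v' hvv]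
    · intro e z z' hzz
      simp only [hg]
      rw [hpdep e₀.1 (π i) z z' hzz, hpdep e.1 (π i) z z' hzz]
    · intro e z hz
      have hp₀ := (hOzmem e₀.1 z).1 hz
      have hp1 := (hOzmem e.1 z).1 hz
      have hdiff : DifferentiableAt ℝ (fun z' => pJ e₀.1 z' / pJ e.1 z') z :=
        ((hpC1 e₀.1 z hp₀).div (hpC1 e.1 z hp1) (ne_of_gt hp1)).differentiableAt one_ne_zero
      exact hdiff.congr_of_eventuallyEq (hgev e z hz)
    · intro z hz hzn
      exact (hnd z ⟨hz, hzn⟩).2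
  -- Oz is nonempty
  have hOzne : Oz.Nonempty := by
    by_contra hemp
    rw [Set.not_nonempty_iff_eq_empty] at hemp
    have hzero : ∀ z, pJ eW z = 0 := by
      intro z
      rcases lt_or_eq_of_le (hpJnn eW z) with hlt | heq0
      · exfalso
        have : z ∈ Oz := (hOzmem eW z).2 hlt
        rw [hemp] at this
        exact this
      · exact heq0.symm
    have h1 := hpprob eW
    have h2 : (∫ z : Fin d → ℝ, pJ eW z) = 0 := by
      have : (fun z : Fin d → ℝ => pJ eW z) = fun _ => (0:ℝ) := funext hzero
      rw [this]
      simp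
    rw [h2] at h1
    exact zero_ne_one h1
  obtain ⟨z₀, hz₀⟩ := hOzne
  -- the permutation
  set ρ : Equiv.Perm (Fin d) := π.symm.trans π' with hρ
  -- reindexed sparsity
  have hAm : ∀ m : Fin d, ∀ z ∈ Oz, ∀ k ∈ barPa Ehat (ρ m), ∀ j ∉ barPa E m,
      fderiv ℝ τ z (Pi.single j 1) k = 0 := by
    intro m
    have := hAi (π.symm m)
    rwa [Equiv.apply_symm_apply] at this
  have hBm : ∀ m : Fin d, ∀ v ∈ Ov, ∀ k ∈ barPa E m, ∀ j ∉ barPa Ehat (ρ m),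
      fderiv ℝ τinv v (Pi.single j 1) k = 0 := by
    intro m
    have := hBi (π.symm m)
    rwa [Equiv.apply_symm_apply] at this
  -- matrices at z₀
  set M : Matrix (Fin d) (Fin d) ℝ :=
    Matrix.of (fun k j => fderiv ℝ τ z₀ (Pi.single j 1) k) with hM
  set N : Matrix (Fin d) (Fin d) ℝ :=
    Matrix.of (fun k j => fderiv ℝ τinv (τ z₀) (Pi.single j 1) k) with hN
  have hNM : N * M = 1 :=
    clm_matrix_mul (fderiv ℝ τ z₀) (fderiv ℝ τinv (τ z₀)) (hcomp1 z₀)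
  have hMN : M * N = 1 :=
    clm_matrix_mul (fderiv ℝ τinv (τ z₀)) (fderiv ℝ τ z₀) (hcomp2 z₀)
  -- graph isomorphism
  have hiso : ∀ m c, E m c ↔ Ehat (ρ m) (ρ c) := by
    apply comb E Ehat hG hGhat ρ M N hMN hNM
    · intro m k j hk hj
      exact hAm m z₀ hz₀ k hk j hj
    · intro m k j hk hj
      exact hBm m (τ z₀) (hmapzv z₀ hz₀) k hk j hj
  refine ⟨ρ, ?_, ?_⟩
  · intro i j
    exact hiso i j
  · intro i j hj z hz
    -- reduce to the matrix entry
    have hproj : fderiv ℝ (fun w => τ w (ρ i)) z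
        = (ContinuousLinearMap.proj (R := ℝ) (φ := fun _ : Fin d => ℝ) (ρ i)).comp
          (fderiv ℝ τ z) := by
      have h1 := ((ContinuousLinearMap.proj (R := ℝ) (φ := fun _ : Fin d => ℝ)
        (ρ i)).hasFDerivAt (x := τ z)).comp z (hτd z).hasFDerivAt
      have h2 : (⇑(ContinuousLinearMap.proj (R := ℝ) (φ := fun _ : Fin d => ℝ) (ρ i)) ∘ τ)
          = fun w => τ w (ρ i) := rfl
      rw [h2] at h1
      exact h1.fderiv
    rw [hproj]
    show fderiv ℝ τ z (Pi.single j 1) (ρ i) = 0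
    have hji : j ≠ i := fun h => hj (h ▸ Set.mem_insert _ _)
    by_cases hjb : j ∈ barPa E i
    · -- j is a parent of i but not effect-dominating
      have hjpa : j ∈ pa E i := by
        rcases Set.mem_insert_iff.1 hjb with h | h
        · exact absurd h hji
        · exact h
      have hjnd : j ∉ domSet E i := fun h => hj (Set.mem_insert_of_mem _ h)
      have : ¬ (ch E i ⊆ ch E j) := by
        intro hsub
        exact hjnd ⟨hjpa, hsub⟩
      rcases Set.not_subset.1 this with ⟨c, hcchi, hcnchj⟩
      have hEic : E i c := hcchi
      have hEji : E j i := hjpa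
      apply hAm c z hz (ρ i) ?_ j ?_
      · exact Set.mem_insert_of_mem _ ((hiso i c).1 hEic)
      · intro hmem
        rcases Set.mem_insert_iff.1 hmem with h | h
        · -- j = c : cycle j → i → j
          subst h
          exact hG j (Relation.TransGen.head hEji (Relation.TransGen.single hEic))
        · exact hcnchj h
    · exact hAm i z hz (ρ i) (Set.mem_insert _ _) j hjb
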